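/- For any two-layer ReLU network f_m(x; θ) = (1/m)Σ_{j=1}^m a_j σ(b_j·x + c_j) of width m, there exists an (m, d+2, 1) residual network g (i.e., with m residual blocks, hidden state dimension d+2, and one neuron per block) such that g(x) = f_m(x; θ) for all x ∈ ℝ^d and the weighted path norm of g equals 3 times the path norm ‖θ‖_P = (1/m)Σ_{j=1}^m |a_j|(‖b_j‖₁ + |c_j|). -/
import Mathlib


open Matrix

noncomputable def relu (t : ℝ) : ℝ := max t 0

noncomputable def resZ {d : ℕ} {ι κ : Type*} [Fintype ι] [Fintype κ]
    (L : ℕ) (V : Matrix ι (Fin (d + 1)) ℝ) (U : ℕ → Matrix ι κ ℝ) (W : ℕ → Matrix κ ι ℝ)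
    (x : Fin d → ℝ) : ℕ → ι → ℝ
  | 0 => V *ᵥ Fin.snoc x 1
  | l + 1 => resZ L V U W x l +
      (1 / L : ℝ) • (U l *ᵥ fun i => relu ((W l *ᵥ resZ L V U W x l) i))

noncomputable def resOut {d : ℕ} {ι κ : Type*} [Fintype ι] [Fintype κ]
    (L : ℕ) (V : Matrix ι (Fin (d + 1)) ℝ) (U : ℕ → Matrix ι κ ℝ) (W : ℕ → Matrix κ ι ℝ)
    (α : ι → ℝ) (x : Fin d → ℝ) : ℝ :=
  α ⬝ᵥ resZ L V U W x L

noncomputable def resPathNorm {d : ℕ} {ι κ : Type*} [Fintype ι] [Fintype κ] [DecidableEq ι]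
    (L : ℕ) (V : Matrix ι (Fin (d + 1)) ℝ) (U : ℕ → Matrix ι κ ℝ) (W : ℕ → Matrix κ ι ℝ)
    (α : ι → ℝ) : ℝ :=
  (fun i => |α i|) ⬝ᵥ
    ((((List.range L).map
        (fun l => (1 : Matrix ι ι ℝ) + (3 / L : ℝ) • ((U l).map abs * (W l).map abs))).prod)
      *ᵥ ((V.map abs) *ᵥ fun _ => (1 : ℝ)))

/- ### Auxiliary constructions -/

namespace Stmt10Aux

/-- extension of a `Fin m`-indexed family to `ℕ`. -/
noncomputable def ext1 {m : ℕ} (a : Fin m → ℝ) (l : ℕ) : ℝ :=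
  if h : l < m then a ⟨l, h⟩ else 0

noncomputable def extV {m d : ℕ} (b : Fin m → Fin d → ℝ) (l : ℕ) : Fin d → ℝ :=
  if h : l < m then b ⟨l, h⟩ else 0

noncomputable def myV (d : ℕ) : Matrix (Fin (d + 2)) (Fin (d + 1)) ℝ :=
  Matrix.of fun i j => if (i : ℕ) = (j : ℕ) then 1 else 0

noncomputable def myU {m : ℕ} (d : ℕ) (a : Fin m → ℝ) (l : ℕ) :
    Matrix (Fin (d + 2)) (Fin 1) ℝ :=
  Matrix.of fun i _ => if (i : ℕ) = d + 1 then ext1 a l else 0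

noncomputable def myW {m d : ℕ} (b : Fin m → Fin d → ℝ) (c : Fin m → ℝ) (l : ℕ) :
    Matrix (Fin 1) (Fin (d + 2)) ℝ :=
  Matrix.of fun _ i =>
    if h : (i : ℕ) < d then extV b l ⟨i, h⟩ else if (i : ℕ) = d then ext1 c l else 0

noncomputable def myα (d : ℕ) : Fin (d + 2) → ℝ := fun i => if (i : ℕ) = d + 1 then 1 else 0

lemma sum_fin_split {d : ℕ} (f : Fin (d + 2) → ℝ) :
    ∑ i, f i = (∑ i : Fin d, f ⟨(i : ℕ), by omega⟩) + f ⟨d, by omega⟩ + f ⟨d + 1, by omega⟩ := by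
  rw [Fin.sum_univ_castSucc, Fin.sum_univ_castSucc]
  rfl

lemma snoc_eq {d : ℕ} (x : Fin d → ℝ) (j : Fin (d + 1)) :
    (Fin.snoc x 1 : Fin (d + 1) → ℝ) j = if h : (j : ℕ) < d then x ⟨j, h⟩ else 1 := by
  rcases lt_or_ge (j : ℕ) d with h | h
  · rw [dif_pos h]
    simp only [Fin.snoc, dif_pos h, cast_eq]
    rfl
  · rw [dif_neg (by omega)]
    simp only [Fin.snoc, dif_neg (by omega : ¬ ((j : ℕ) < d)), cast_eq]

variable {d m : ℕ} (a : Fin m → ℝ) (b : Fin m → Fin d → ℝ) (c : Fin m → ℝ)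

lemma z_low (x : Fin d → ℝ) (l : ℕ) (i : Fin (d + 2)) (hi : (i : ℕ) ≤ d) :
    resZ m (myV d) (myU d a) (myW b c) x l i =
      if h : (i : ℕ) < d then x ⟨i, h⟩ else 1 := by
  induction l with
  | zero =>
      show (myV d *ᵥ Fin.snoc x 1) i = _
      rw [mulVec, dotProduct]
      rw [Finset.sum_eq_single (⟨(i : ℕ), by omega⟩ : Fin (d + 1))]
      · rw [snoc_eq]
        simp [myV]
      · intro j _ hj
        have : (i : ℕ) ≠ (j : ℕ) := fun h => hj (Fin.ext h.symm)
        simp [myV, this]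
      · intro h; exact absurd (Finset.mem_univ _) h
  | succ l ih =>
      show resZ m (myV d) (myU d a) (myW b c) x l i
          + ((1 / (m : ℝ)) • ((myU d a l) *ᵥ fun k =>
              relu (((myW b c l) *ᵥ resZ m (myV d) (myU d a) (myW b c) x l) k))) i = _
      rw [ih]
      have : (i : ℕ) ≠ d + 1 := by omega
      simp [mulVec, dotProduct, myU, this]

lemma wz (x : Fin d → ℝ) (l : ℕ) (k : Fin 1) :
    ((myW b c l) *ᵥ resZ m (myV d) (myU d a) (myW b c) x l) k
      = extV b l ⬝ᵥ x + ext1 c l := by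
  rw [mulVec, dotProduct, sum_fin_split]
  have h1 : ∀ i : Fin d,
      myW b c l k ⟨(i : ℕ), by omega⟩ * resZ m (myV d) (myU d a) (myW b c) x l ⟨(i : ℕ), by omega⟩
        = extV b l i * x i := by
    intro i
    rw [z_low a b c x l _ (by simp)]
    have hi : (i : ℕ) < d := i.isLt
    simp only [myW, Matrix.of_apply]
    rw [dif_pos hi, dif_pos hi]
  have h2 : myW b c l k ⟨d, by omega⟩ * resZ m (myV d) (myU d a) (myW b c) x l ⟨d, by omega⟩
      = ext1 c l := by
    rw [z_low a b c x l _ (by simp)]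
    simp [myW]
  have h3 : myW b c l k ⟨d + 1, by omega⟩
      * resZ m (myV d) (myU d a) (myW b c) x l ⟨d + 1, by omega⟩ = 0 := by
    simp [myW]
  rw [Finset.sum_congr rfl fun i _ => h1 i, h2, h3, add_zero, dotProduct]

lemma z_last (x : Fin d → ℝ) (l : ℕ) :
    resZ m (myV d) (myU d a) (myW b c) x l ⟨d + 1, by omega⟩
      = (1 / (m : ℝ)) * ∑ j ∈ Finset.range l, ext1 a j * relu (extV b j ⬝ᵥ x + ext1 c j) := by
  induction l with
  | zero =>
      show (myV d *ᵥ Fin.snoc x 1) _ = _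
      rw [mulVec, dotProduct]
      rw [Finset.sum_eq_zero]
      · simp
      · intro j _
        have : (d + 1 : ℕ) ≠ (j : ℕ) := by have := j.isLt; omega
        simp [myV, this]
  | succ l ih =>
      show resZ m (myV d) (myU d a) (myW b c) x l _
          + ((1 / (m : ℝ)) • ((myU d a l) *ᵥ fun k =>
              relu (((myW b c l) *ᵥ resZ m (myV d) (myU d a) (myW b c) x l) k))) _ = _
      have hU : ∀ k : Fin 1, myU (m := m) d a l ⟨d + 1, by omega⟩ k = ext1 a l := by
        intro k; simp [myU]
      have hw : (fun k => relu (((myW b c l) *ᵥ resZ m (myV d) (myU d a) (myW b c) x l) k))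
          = fun _ : Fin 1 => relu (extV b l ⬝ᵥ x + ext1 c l) := by
        funext k; rw [wz]
      simp only [Pi.add_apply, Pi.smul_apply, smul_eq_mul, ih, hw]
      simp only [mulVec, dotProduct, Fin.sum_univ_one, hU]
      rw [Finset.sum_range_succ]
      ring

/- ### Path norm computations -/

lemma v_eq : ((myV d).map abs *ᵥ fun _ => (1 : ℝ))
    = fun i : Fin (d + 2) => if (i : ℕ) = d + 1 then 0 else 1 := by
  funext i
  rw [mulVec, dotProduct]
  by_cases hi : (i : ℕ) = d + 1
  · rw [if_pos hi, Finset.sum_eq_zero]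
    intro j _
    have : (i : ℕ) ≠ (j : ℕ) := by have := j.isLt; omega
    simp [myV, this]
  · rw [if_neg hi]
    have hi' : (i : ℕ) < d + 1 := by have := i.isLt; omega
    rw [Finset.sum_eq_single (⟨(i : ℕ), hi'⟩ : Fin (d + 1))]
    · simp [myV]
    · intro j _ hj
      have : (i : ℕ) ≠ (j : ℕ) := fun h => hj (Fin.ext h.symm)
      simp [myV, this]
    · intro h; exact absurd (Finset.mem_univ _) h

lemma N_apply (l : ℕ) (i j : Fin (d + 2)) :
    ((myU d a l).map abs * (myW b c l).map abs) i j
      = |myU d a l i 0| * |myW b c l 0 j| := by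
  simp [Matrix.mul_apply, Fin.sum_univ_one]

lemma N_e (l : ℕ) :
    ((myU d a l).map abs * (myW b c l).map abs) *ᵥ myα d = 0 := by
  funext i
  rw [mulVec, dotProduct, Finset.sum_eq_zero]
  · rfl
  · intro j _
    rcases eq_or_ne ((j : ℕ)) (d + 1) with h | h
    · rw [N_apply]
      have hW : myW b c l 0 j = 0 := by
        simp only [myW, Matrix.of_apply, h]
        rw [dif_neg (by omega), if_neg (by omega)]
      simp [hW]
    · simp [myα, h]

/-- `S l` : the ℓ¹ norm of the `l`-th block. -/
noncomputable def Sval {m d : ℕ} (b : Fin m → Fin d → ℝ) (c : Fin m → ℝ) (l : ℕ) : ℝ :=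
  (∑ i, |extV b l i|) + |ext1 c l|

lemma N_v (l : ℕ) :
    (((myU d a l).map abs * (myW b c l).map abs) *ᵥ
        fun i : Fin (d + 2) => if (i : ℕ) = d + 1 then 0 else 1)
      = (|ext1 a l| * Sval b c l) • myα d := by
  funext i
  rw [mulVec, dotProduct]
  simp only [N_apply]
  have hT : ∑ j : Fin (d + 2),
      |myW b c l 0 j| * (if (j : ℕ) = d + 1 then (0 : ℝ) else 1) = Sval b c l := by
    rw [sum_fin_split]
    have h1 : ∀ j : Fin d,
        |myW b c l 0 ⟨(j : ℕ), by omega⟩| * (if ((⟨(j : ℕ), by omega⟩ : Fin (d + 2)) : ℕ) = d + 1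
            then (0 : ℝ) else 1) = |extV b l j| := by
      intro j
      have hj : (j : ℕ) < d := j.isLt
      rw [if_neg (by simp; omega), mul_one]
      simp only [myW, Matrix.of_apply]
      rw [dif_pos hj]
    rw [Finset.sum_congr rfl fun j _ => h1 j]
    have h2 : |myW b c l 0 ⟨d, by omega⟩| * (if ((⟨d, by omega⟩ : Fin (d + 2)) : ℕ) = d + 1
        then (0 : ℝ) else 1) = |ext1 c l| := by
      rw [if_neg (by simp), mul_one]
      simp only [myW, Matrix.of_apply]
      rw [dif_neg (by omega)]
      simp
    rw [h2]
    have h3 : |myW b c l 0 ⟨d + 1, by omega⟩| * (if ((⟨d + 1, by omega⟩ : Fin (d + 2)) : ℕ) = d + 1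
        then (0 : ℝ) else 1) = 0 := by
      rw [if_pos rfl, mul_zero]
    rw [h3, add_zero, Sval]
  calc ∑ j : Fin (d + 2), |myU d a l i 0| * |myW b c l 0 j| * (if (j : ℕ) = d + 1 then (0:ℝ) else 1)
      = |myU d a l i 0| * ∑ j : Fin (d + 2),
          |myW b c l 0 j| * (if (j : ℕ) = d + 1 then (0 : ℝ) else 1) := by
        rw [Finset.mul_sum]; exact Finset.sum_congr rfl fun j _ => by ring
    _ = |myU d a l i 0| * Sval b c l := by rw [hT]
    _ = ((|ext1 a l| * Sval b c l) • myα d) i := by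
        simp only [Pi.smul_apply, smul_eq_mul, myα, myU, Matrix.of_apply]
        by_cases h : (i : ℕ) = d + 1 <;> simp [h] <;> ring

lemma P_v (l : ℕ) :
    ((1 : Matrix (Fin (d + 2)) (Fin (d + 2)) ℝ)
        + (3 / (m : ℝ)) • ((myU d a l).map abs * (myW b c l).map abs))
      *ᵥ (fun i : Fin (d + 2) => if (i : ℕ) = d + 1 then 0 else 1)
      = (fun i : Fin (d + 2) => if (i : ℕ) = d + 1 then 0 else 1)
        + ((3 / (m : ℝ)) * (|ext1 a l| * Sval b c l)) • myα d := by
  rw [add_mulVec, one_mulVec, smul_mulVec, N_v, smul_smul]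

lemma P_e (l : ℕ) :
    ((1 : Matrix (Fin (d + 2)) (Fin (d + 2)) ℝ)
        + (3 / (m : ℝ)) • ((myU d a l).map abs * (myW b c l).map abs)) *ᵥ myα d = myα d := by
  rw [add_mulVec, one_mulVec, smul_mulVec, N_e, smul_zero, add_zero]

lemma prod_e (L : ℕ) :
    (((List.range L).map (fun l => (1 : Matrix (Fin (d + 2)) (Fin (d + 2)) ℝ)
        + (3 / (m : ℝ)) • ((myU d a l).map abs * (myW b c l).map abs))).prod) *ᵥ myα d
      = myα d := by
  induction L with
  | zero => simp
  | succ L ih =>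
      rw [List.range_succ, List.map_append, List.prod_append, List.map_singleton,
        List.prod_singleton, ← mulVec_mulVec, P_e, ih]

lemma prod_v (L : ℕ) :
    (((List.range L).map (fun l => (1 : Matrix (Fin (d + 2)) (Fin (d + 2)) ℝ)
        + (3 / (m : ℝ)) • ((myU d a l).map abs * (myW b c l).map abs))).prod)
      *ᵥ (fun i : Fin (d + 2) => if (i : ℕ) = d + 1 then 0 else 1)
      = (fun i : Fin (d + 2) => if (i : ℕ) = d + 1 then 0 else 1)
        + ((3 / (m : ℝ)) * ∑ l ∈ Finset.range L, |ext1 a l| * Sval b c l) • myα d := by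
  induction L with
  | zero => simp
  | succ L ih =>
      rw [List.range_succ, List.map_append, List.prod_append, List.map_singleton,
        List.prod_singleton, ← mulVec_mulVec]
      rw [P_v, mulVec_add, ih, mulVec_smul, prod_e, Finset.sum_range_succ]
      funext i
      simp only [Pi.add_apply, Pi.smul_apply, smul_eq_mul]
      ring

end Stmt10Aux

open Stmt10Aux in
/-- every width-`m` two-layer ReLU network can be represented exactly by an
`(m, d+2, 1)` residual network whose weighted path norm equals `3‖θ‖_P`. -/
theorem stmt_10 {d m : ℕ} (hm : 0 < m)
    (a : Fin m → ℝ) (b : Fin m → Fin d → ℝ) (c : Fin m → ℝ) :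
    ∃ (V : Matrix (Fin (d + 2)) (Fin (d + 1)) ℝ)
      (U : ℕ → Matrix (Fin (d + 2)) (Fin 1) ℝ)
      (W : ℕ → Matrix (Fin 1) (Fin (d + 2)) ℝ)
      (α : Fin (d + 2) → ℝ),
      (∀ x : Fin d → ℝ,
          resOut m V U W α x = (1 / m : ℝ) * ∑ j, a j * relu (b j ⬝ᵥ x + c j)) ∧
        resPathNorm m V U W α
          = 3 * ((1 / m : ℝ) * ∑ j, |a j| * ((∑ i, |b j i|) + |c j|)) := by
  refine ⟨myV d, myU d a, myW b c, myα d, ?_, ?_⟩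
  · intro x
    rw [resOut, dotProduct, sum_fin_split]
    have h1 : ∀ i : Fin d,
        myα d ⟨(i : ℕ), by omega⟩ * resZ m (myV d) (myU d a) (myW b c) x m ⟨(i : ℕ), by omega⟩
          = 0 := by
      intro i
      have : ((i : ℕ) : ℕ) ≠ d + 1 := by have := i.isLt; omega
      simp [myα, this]
    have h2 : myα d ⟨d, by omega⟩ = 0 := by simp [myα]
    rw [Finset.sum_eq_zero fun i _ => h1 i, h2, zero_mul, zero_add, zero_add]
    have h3 : myα d ⟨d + 1, by omega⟩ = 1 := by simp [myα]
    rw [h3, one_mul, z_last]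
    congr 1
    rw [← Fin.sum_univ_eq_sum_range
      (fun j => ext1 a j * relu (extV b j ⬝ᵥ x + ext1 c j)) m]
    refine Finset.sum_congr rfl fun j _ => ?_
    simp [ext1, extV, j.isLt]
  · rw [resPathNorm]
    have hα : (fun i => |myα d i|) = myα d := by
      funext i
      simp only [myα]
      split_ifs <;> simp
    rw [hα, v_eq, prod_v, dotProduct, sum_fin_split]
    have h1 : ∀ i : Fin d, myα d ⟨(i : ℕ), by omega⟩ *
        (((fun i : Fin (d + 2) => if (i : ℕ) = d + 1 then (0:ℝ) else 1)
          + ((3 / (m : ℝ)) * ∑ l ∈ Finset.range m, |ext1 a l| * Sval b c l) • myα d)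
            ⟨(i : ℕ), by omega⟩) = 0 := by
      intro i
      have : ((i : ℕ)) ≠ d + 1 := by have := i.isLt; omega
      simp [myα, this]
    have h2 : myα d ⟨d, by omega⟩ = 0 := by simp [myα]
    rw [Finset.sum_eq_zero fun i _ => h1 i, h2, zero_mul, zero_add, zero_add]
    have h3 : myα d ⟨d + 1, by omega⟩ = 1 := by simp [myα]
    simp only [Pi.add_apply, Pi.smul_apply, smul_eq_mul, h3, if_pos rfl, mul_one, one_mul,
      zero_add]
    have h4 : ∑ l ∈ Finset.range m, |ext1 a l| * Sval b c l
        = ∑ j : Fin m, |a j| * ((∑ i, |b j i|) + |c j|) := by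
      rw [← Fin.sum_univ_eq_sum_range (fun l => |ext1 a l| * Sval b c l) m]
      refine Finset.sum_congr rfl fun j _ => ?_
      simp [ext1, extV, Sval, j.isLt]
    rw [h4]
    norm_num
    ring
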